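/- For every ω ∈ ℝ, ∫_ℝ sinc(x/4)⁴ · e^{−iωx} dx = 32π · (𝟙 ∗ 𝟙 ∗ 𝟙 ∗ 𝟙)(ω), where 𝟙 denotes the indicator function of the interval [−1/4, 1/4] and ∗ denotes convolution on ℝ with Lebesgue measure; in particular the left-hand side is real. -/

import Mathlib

open Real MeasureTheory

/-- The cardinal sine function: `sinc z = sin z / z` for `z ≠ 0`, `sinc 0 = 1`. -/
noncomputable def sinc (x : ℝ) : ℝ := if x = 0 then 1 else Real.sin x / x

/-- Convolution of two real functions on `ℝ` with respect to Lebesgue measure. -/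
noncomputable def conv (f g : ℝ → ℝ) : ℝ → ℝ := fun x => ∫ t, f t * g (x - t)

/-- The indicator function of the interval `[-1/4, 1/4]`. -/
noncomputable def ind : ℝ → ℝ := Set.indicator (Set.Icc (-(1/4) : ℝ) (1/4)) fun _ => 1

open Complex
open scoped FourierTransform Convolution


lemma sinc_neg (x : ℝ) : _root_.sinc (-x) = _root_.sinc x := by
  unfold _root_.sinc
  rcases eq_or_ne x 0 with h | h
  · simp [h]
  · rw [if_neg (neg_ne_zero.2 h), if_neg h, Real.sin_neg, neg_div_neg_eq]

lemma abs_sinc_le_one (x : ℝ) : |_root_.sinc x| ≤ 1 := by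
  unfold _root_.sinc
  rcases eq_or_ne x 0 with h | h
  · simp [h]
  · rw [if_neg h, abs_div, div_le_one (abs_pos.2 h)]
    exact Real.abs_sin_le_abs

lemma abs_sinc_le_inv (x : ℝ) (hx : x ≠ 0) : |_root_.sinc x| ≤ |x|⁻¹ := by
  rw [_root_.sinc, if_neg hx, abs_div, div_eq_mul_inv]
  exact mul_le_of_le_one_left (by positivity) (Real.abs_sin_le_one x)

lemma measurable_sinc : Measurable _root_.sinc := by
  unfold _root_.sinc
  exact Measurable.ite (measurableSet_singleton 0) measurable_const
    (Real.measurable_sin.div measurable_id)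

lemma integrable_sinc_pow4 : Integrable (fun x : ℝ => _root_.sinc x ^ 4) := by
  have hmeas : AEStronglyMeasurable (fun x : ℝ => _root_.sinc x ^ 4) volume :=
    ((_root_.measurable_sinc.pow_const 4)).aestronglyMeasurable
  have hbound : ∀ x : ℝ, ‖_root_.sinc x ^ 4‖ ≤ 2 / (1 + x ^ 2) := by
    intro x
    rw [norm_pow, Real.norm_eq_abs]
    rcases le_or_gt (|x|) 1 with h | h
    · have h1 : |_root_.sinc x| ^ 4 ≤ 1 := pow_le_one₀ (abs_nonneg _) (_root_.abs_sinc_le_one x)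
      have h2 : 1 + x ^ 2 ≤ 2 := by nlinarith [_root_.sq_abs x, mul_nonneg (sub_nonneg.2 h) (abs_nonneg x)]
      have h3 : (1 : ℝ) ≤ 2 / (1 + x ^ 2) := by
        rw [le_div_iff₀ (by positivity)]; linarith
      linarith
    · have hx : x ≠ 0 := by intro h0; rw [h0] at h; simp at h; linarith
      have h1 : |_root_.sinc x| ^ 4 ≤ (|x|⁻¹) ^ 4 :=
        pow_le_pow_left₀ (abs_nonneg _) (abs_sinc_le_inv x hx) 4
      have hx1 : (1:ℝ) ≤ |x| := h.le
      have h2 : (|x|⁻¹) ^ 4 ≤ 2 / (1 + x ^ 2) := by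
        rw [inv_pow, inv_eq_one_div, div_le_div_iff₀ (by positivity) (by positivity)]
        have hxx : x ^ 2 = |x| ^ 2 := (_root_.sq_abs x).symm
        nlinarith [sq_nonneg (|x| ^ 2 - 1), sq_nonneg (|x| - 1)]
      linarith
  have hint : Integrable (fun x : ℝ => 2 / (1 + x ^ 2)) := by
    simpa [div_eq_mul_inv] using (integrable_inv_one_add_sq).const_mul 2
  exact hint.mono' hmeas (Filter.Eventually.of_forall hbound)

lemma measurable_ind : Measurable ind :=
  (measurable_const.indicator measurableSet_Icc)

lemma integrable_ind : Integrable ind := by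
  rw [ind, integrable_indicator_iff measurableSet_Icc]
  exact integrableOn_const (by rw [Real.volume_Icc]; exact ENNReal.ofReal_ne_top)

lemma toReal_ofReal_max (c : ℝ) : (ENNReal.ofReal c).toReal = max c 0 := by
  rcases le_or_gt 0 c with h | h
  · rw [ENNReal.toReal_ofReal h, max_eq_left h]
  · rw [ENNReal.ofReal_of_nonpos h.le, ENNReal.toReal_zero, max_eq_right h.le]

lemma conv_ind_ind (x : ℝ) :
    conv ind ind x = max (min (1/4) (x + 1/4) - max (-(1/4)) (x - 1/4)) 0 := by
  have key : (fun t => ind t * ind (x - t)) =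
      Set.indicator ((Set.Icc (-(1/4):ℝ) (1/4)) ∩ (Set.Icc (x - 1/4) (x + 1/4)))
        (fun _ => (1:ℝ)) := by
    funext t
    have h2' : (t ∈ Set.Icc (x - 1/4) (x + 1/4)) ↔ (x - t ∈ Set.Icc (-(1/4):ℝ) (1/4)) := by
      simp only [Set.mem_Icc]
      constructor <;> rintro ⟨a, b⟩ <;> exact ⟨by linarith, by linarith⟩
    rw [Set.indicator_apply]
    by_cases h1 : t ∈ Set.Icc (-(1/4):ℝ) (1/4)
    · by_cases h3 : t ∈ Set.Icc (x - 1/4) (x + 1/4)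
      · rw [if_pos ⟨h1, h3⟩]
        have h2 := h2'.1 h3
        rw [ind, Set.indicator_of_mem h1, Set.indicator_of_mem h2, mul_one]
      · rw [if_neg (fun hc => h3 hc.2)]
        have h2 : x - t ∉ Set.Icc (-(1/4):ℝ) (1/4) := fun hc => h3 (h2'.2 hc)
        rw [ind, Set.indicator_of_notMem h2, mul_zero]
    · rw [if_neg (fun hc => h1 hc.1)]
      rw [ind, Set.indicator_of_notMem h1, zero_mul]
  rw [conv, key, integral_indicator_const _ (measurableSet_Icc.inter measurableSet_Icc),
    Set.Icc_inter_Icc, Real.volume_real_Icc, smul_eq_mul, mul_one]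

lemma continuous_conv_ind_ind : Continuous (conv ind ind) := by
  have : (conv ind ind) = fun x => max (min (1/4) (x + 1/4) - max (-(1/4)) (x - 1/4)) 0 := by
    funext x; exact conv_ind_ind x
  rw [this]
  fun_prop

lemma hasCompactSupport_conv_ind_ind : HasCompactSupport (conv ind ind) := by
  apply HasCompactSupport.intro (isCompact_Icc (a := (-(1:ℝ))) (b := 1))
  intro x hx
  rw [conv_ind_ind, max_eq_right]
  simp only [Set.mem_Icc, not_and_or, not_le] at hx
  rcases hx with h | h
  · rw [sub_nonpos]
    calc min (1/4) (x + 1/4) ≤ x + 1/4 := min_le_right _ _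
    _ ≤ -(1/4) := by linarith
    _ ≤ max (-(1/4)) (x - 1/4) := le_max_left _ _
  · rw [sub_nonpos]
    calc min (1/4) (x + 1/4) ≤ 1/4 := min_le_left _ _
    _ ≤ x - 1/4 := by linarith
    _ ≤ max (-(1/4)) (x - 1/4) := le_max_right _ _

lemma norm_char (y : ℝ) : ‖((Real.fourierChar y : Circle) : ℂ)‖ = 1 := by
  exact Circle.norm_coe _

lemma fourier_conv {f g : ℝ → ℂ} (hf : Integrable f) (hg : Integrable g) (ξ : ℝ) :
    𝓕 (fun x => ∫ t, f t * g (x - t)) ξ = 𝓕 f ξ * 𝓕 g ξ := by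
  have hbase : Integrable (fun p : ℝ × ℝ => f p.2 * g (p.1 - p.2))
      ((volume : Measure ℝ).prod volume) := by
    have := hf.convolution_integrand (ContinuousLinearMap.mul ℝ ℂ) hg
    simpa using this
  have hcont : Continuous (fun p : ℝ × ℝ => ((Real.fourierChar (-(p.1 * ξ)) : Circle) : ℂ)) := by
    exact continuous_subtype_val.comp
      (Real.continuous_fourierChar.comp (continuous_fst.mul continuous_const).neg)
  have hInt : Integrable (Function.uncurry fun x t =>
      ((Real.fourierChar (-(x * ξ)) : Circle) : ℂ) * (f t * g (x - t)))
      ((volume : Measure ℝ).prod volume) := by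
    apply Integrable.bdd_mul hbase hcont.aestronglyMeasurable
    exact Filter.Eventually.of_forall (fun p => le_of_eq (norm_char _))
  calc 𝓕 (fun x => ∫ t, f t * g (x - t)) ξ
      = ∫ x, ((Real.fourierChar (-(x * ξ)) : Circle) : ℂ) • ∫ t, f t * g (x - t) := by
        rw [Real.fourier_real_eq]; rfl
    _ = ∫ x, ∫ t, ((Real.fourierChar (-(x * ξ)) : Circle) : ℂ) * (f t * g (x - t)) := by
        congr 1; funext x; rw [← integral_smul]; rfl
    _ = ∫ t, ∫ x, ((Real.fourierChar (-(x * ξ)) : Circle) : ℂ) * (f t * g (x - t)) := by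
        exact integral_integral_swap hInt
    _ = ∫ t, ∫ x, ((Real.fourierChar (-((x + t) * ξ)) : Circle) : ℂ) * (f t * g x) := by
        congr 1; funext t
        rw [← integral_add_right_eq_self
          (fun x => ((Real.fourierChar (-(x * ξ)) : Circle) : ℂ) * (f t * g (x - t))) t]
        simp
    _ = ∫ t, ((Real.fourierChar (-(t * ξ)) : Circle) : ℂ) * f t *
          ∫ x, ((Real.fourierChar (-(x * ξ)) : Circle) : ℂ) * g x := by
        congr 1; funext t
        rw [← integral_const_mul]
        congr 1; funext x
        have : Real.fourierChar (-((x + t) * ξ)) =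
            Real.fourierChar (-(t * ξ)) * Real.fourierChar (-(x * ξ)) := by
          rw [← AddChar.map_add_eq_mul]; ring_nf
        rw [this]
        push_cast [Circle.coe_mul]
        ring
    _ = 𝓕 f ξ * 𝓕 g ξ := by
        rw [integral_mul_const, Real.fourier_real_eq, Real.fourier_real_eq]
        simp_rw [Circle.smul_def, smul_eq_mul]

lemma fourier_ind (ξ : ℝ) :
    𝓕 (fun t : ℝ => (ind t : ℂ)) ξ = ((1/2 * _root_.sinc (π * ξ / 2) : ℝ) : ℂ) := by
  have step1 : 𝓕 (fun t : ℝ => (ind t : ℂ)) ξ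
      = ∫ v in Set.Icc (-(1/4):ℝ) (1/4), ((Real.fourierChar (-(v * ξ)) : Circle) : ℂ) := by
    rw [Real.fourier_real_eq, ← integral_indicator measurableSet_Icc]
    congr 1; funext v
    by_cases h : v ∈ Set.Icc (-(1/4):ℝ) (1/4)
    · rw [Set.indicator_of_mem h, ind, Set.indicator_of_mem h, Circle.smul_def]
      simp
    · rw [Set.indicator_of_notMem h, ind, Set.indicator_of_notMem h]
      simp
  rcases eq_or_ne ξ 0 with h0 | h0
  · rw [step1, h0]
    simp only [mul_zero, neg_zero, zero_mul, zero_div, AddChar.map_zero_eq_one]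
    rw [setIntegral_const]
    simp [Real.volume_Icc, _root_.sinc]
    norm_num [ENNReal.toReal_ofReal]
  · have hc : ((-(2 * π * ξ) : ℝ) : ℂ) * Complex.I ≠ 0 := by
      simp [Complex.ext_iff, Real.pi_ne_zero, h0]
    have step2 : ∫ v in Set.Icc (-(1/4):ℝ) (1/4), ((Real.fourierChar (-(v * ξ)) : Circle) : ℂ)
        = ∫ v in (-(1/4):ℝ)..(1/4), Complex.exp ((((-(2 * π * ξ) : ℝ) : ℂ) * Complex.I) * v) := by
      rw [MeasureTheory.integral_Icc_eq_integral_Ioc,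
        ← intervalIntegral.integral_of_le (by norm_num : (-(1/4):ℝ) ≤ 1/4)]
      congr 1; funext v
      rw [Real.fourierChar_apply]
      congr 1
      push_cast
      ring
    rw [step1, step2, integral_exp_mul_complex hc]
    have hθ : (π * ξ / 2 : ℝ) ≠ 0 := by
      simp [Real.pi_ne_zero, h0]
    have e1 : (((-(2 * π * ξ) : ℝ) : ℂ) * Complex.I) * ((1/4 : ℝ) : ℂ)
        = ((-(π * ξ / 2) : ℝ) : ℂ) * Complex.I := by push_cast; ring
    have e2 : (((-(2 * π * ξ) : ℝ) : ℂ) * Complex.I) * ((-(1/4) : ℝ) : ℂ)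
        = (((π * ξ / 2) : ℝ) : ℂ) * Complex.I := by push_cast; ring
    rw [show ((-(1/4):ℝ) : ℂ) = ((-(1/4) : ℝ) : ℂ) from rfl]
    rw [show ((1/4 : ℝ) : ℂ) = ((1/4 : ℝ) : ℂ) from rfl]
    rw [e1, e2, Complex.exp_mul_I, Complex.exp_mul_I]
    rw [_root_.sinc, if_neg hθ]
    have : Complex.cos ((-(π * ξ / 2) : ℝ) : ℂ) = Complex.cos (((π * ξ / 2) : ℝ) : ℂ) := by
      push_cast; rw [Complex.cos_neg]
    have hs : Complex.sin ((-(π * ξ / 2) : ℝ) : ℂ) = - Complex.sin (((π * ξ / 2) : ℝ) : ℂ) := by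
      push_cast; rw [Complex.sin_neg]
    rw [this, hs]
    have hsin : Complex.sin (((π * ξ / 2) : ℝ) : ℂ) = ((Real.sin (π * ξ / 2) : ℝ) : ℂ) := by
      rw [Complex.ofReal_sin]
    rw [hsin]
    push_cast
    field_simp
    ring_nf

lemma conv_eq_convolution (f g : ℝ → ℝ) :
    conv f g = f ⋆[ContinuousLinearMap.mul ℝ ℝ, volume] g := rfl

lemma hasCompactSupport_ind : HasCompactSupport ind := by
  apply HasCompactSupport.intro (isCompact_Icc (a := (-(1/4):ℝ)) (b := 1/4))
  intro x hx
  exact Set.indicator_of_notMem hx _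

lemma integrable_T2 : Integrable (conv ind ind) :=
  continuous_conv_ind_ind.integrable_of_hasCompactSupport hasCompactSupport_conv_ind_ind

lemma continuous_T3 : Continuous (conv (conv ind ind) ind) := by
  rw [conv_eq_convolution]
  exact hasCompactSupport_conv_ind_ind.continuous_convolution_left _ continuous_conv_ind_ind
    integrable_ind.locallyIntegrable

lemma hasCompactSupport_T3 : HasCompactSupport (conv (conv ind ind) ind) := by
  rw [conv_eq_convolution]
  exact hasCompactSupport_conv_ind_ind.convolution _ hasCompactSupport_ind

lemma integrable_T3 : Integrable (conv (conv ind ind) ind) :=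
  continuous_T3.integrable_of_hasCompactSupport hasCompactSupport_T3

lemma continuous_T4 : Continuous (conv (conv (conv ind ind) ind) ind) := by
  rw [conv_eq_convolution]
  exact hasCompactSupport_T3.continuous_convolution_left _ continuous_T3
    integrable_ind.locallyIntegrable

lemma hasCompactSupport_T4 : HasCompactSupport (conv (conv (conv ind ind) ind) ind) := by
  rw [conv_eq_convolution]
  exact hasCompactSupport_T3.convolution _ hasCompactSupport_ind

lemma integrable_T4 : Integrable (conv (conv (conv ind ind) ind) ind) :=
  continuous_T4.integrable_of_hasCompactSupport hasCompactSupport_T4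

lemma ofReal_conv (f g : ℝ → ℝ) :
    (fun x => ((conv f g x : ℝ) : ℂ)) = fun x => ∫ t, ((f t : ℂ)) * ((g (x - t) : ℂ)) := by
  funext x
  simp only [conv, ← Complex.ofReal_mul]
  exact (integral_ofReal (𝕜 := ℂ)).symm

lemma fourier_T4 (ξ : ℝ) :
    𝓕 (fun x => ((conv (conv (conv ind ind) ind) ind x : ℝ) : ℂ)) ξ
      = ((1/16 * _root_.sinc (π * ξ / 2) ^ 4 : ℝ) : ℂ) := by
  rw [ofReal_conv,
    fourier_conv (f := fun t => ((conv (conv ind ind) ind t : ℝ) : ℂ))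
      (g := fun t => ((ind t : ℝ) : ℂ)) integrable_T3.ofReal integrable_ind.ofReal,
    ofReal_conv,
    fourier_conv (f := fun t => ((conv ind ind t : ℝ) : ℂ))
      (g := fun t => ((ind t : ℝ) : ℂ)) integrable_T2.ofReal integrable_ind.ofReal,
    ofReal_conv,
    fourier_conv (f := fun t => ((ind t : ℝ) : ℂ))
      (g := fun t => ((ind t : ℝ) : ℂ)) integrable_ind.ofReal integrable_ind.ofReal,
    fourier_ind]
  push_cast
  ring

lemma integrable_fourier_T4 :
    Integrable (𝓕 (fun x => ((conv (conv (conv ind ind) ind) ind x : ℝ) : ℂ))) := by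
  have heq : 𝓕 (fun x => ((conv (conv (conv ind ind) ind) ind x : ℝ) : ℂ))
      = fun ξ => ((1/16 * _root_.sinc (π * ξ / 2) ^ 4 : ℝ) : ℂ) := funext fourier_T4
  rw [heq]
  refine Integrable.ofReal (𝕜 := ℂ) (f := fun ξ => 1/16 * _root_.sinc (π * ξ / 2) ^ 4) ?_
  have h1 : Integrable (fun ξ : ℝ => _root_.sinc (π/2 * ξ) ^ 4) :=
    (integrable_comp_mul_left_iff (fun x => _root_.sinc x ^ 4)
      (by positivity : (π/2 : ℝ) ≠ 0)).2 integrable_sinc_pow4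
  have h2 := h1.const_mul (1/16 : ℝ)
  have heq2 : ∀ ξ : ℝ, π * ξ / 2 = π/2 * ξ := fun ξ => by ring
  simpa [heq2] using h2

theorem stmt_16 (ω : ℝ) :
    ∫ x : ℝ, (↑(_root_.sinc (x / 4) ^ 4) : ℂ) * Complex.exp (-(Complex.I * ω * x)) =
      ((32 * π * conv (conv (conv ind ind) ind) ind ω : ℝ) : ℂ) := by
  set F4 : ℝ → ℂ := fun x => ((conv (conv (conv ind ind) ind) ind x : ℝ) : ℂ) with hF4def
  set Φ : ℝ → ℂ := fun x => (↑(_root_.sinc (x / 4) ^ 4) : ℂ) * Complex.exp (-(Complex.I * ω * x))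
    with hΦdef
  have hscale := MeasureTheory.Measure.integral_comp_mul_left Φ (-(2*π))
  have habs : |(-(2*π))⁻¹| = (2*π)⁻¹ := by
    rw [abs_inv, abs_neg, abs_of_pos (by positivity)]
  have hinv : 𝓕⁻ (𝓕 F4) ω = F4 ω :=
    (integrable_T4.ofReal).fourierInv_fourier_eq integrable_fourier_T4
      ((Complex.continuous_ofReal.comp continuous_T4).continuousAt)
  have hpt : ∀ v : ℝ, Φ (-(2*π) * v)
      = 16 * (((Real.fourierChar (-(v * -ω)) : Circle) : ℂ) • 𝓕 F4 v) := by
    intro v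
    rw [hΦdef]
    simp only []
    rw [fourier_T4 v, smul_eq_mul, Real.fourierChar_apply]
    have h1 : _root_.sinc (-(2*π) * v / 4) = _root_.sinc (π * v / 2) := by
      rw [show (-(2*π) * v / 4 : ℝ) = -(π * v / 2) by ring, _root_.sinc_neg]
    rw [h1]
    have h2 : Complex.exp (-(Complex.I * ω * ((-(2*π) * v : ℝ) : ℂ)))
        = Complex.exp (↑(2 * π * -(v * -ω)) * Complex.I) := by
      congr 1
      push_cast
      ring
    rw [h2]
    push_cast
    ring
  have hswap : ∫ x, Φ (-(2*π) * x) = 16 * F4 ω := by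
    rw [← hinv, Real.fourierInv_eq_fourier_neg,
      Real.fourier_real_eq, ← integral_const_mul]
    exact integral_congr_ae (Filter.Eventually.of_forall hpt)
  have : ∫ x, Φ x = (2*π : ℝ) • (16 * F4 ω) := by
    rw [← hswap]
    rw [hswap] at hscale
    rw [habs] at hscale
    rw [← hswap] at hscale
    rw [hscale, smul_smul]
    rw [mul_inv_cancel₀ (by positivity : (2*π : ℝ) ≠ 0), one_smul]
  rw [hΦdef] at this
  rw [this, hF4def]
  rw [real_smul]
  push_cast
  ring
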